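/- Let A be a symmetric positive definite p×p matrix with smallest eigenvalue τ_A > 0, B a p×p matrix, and Y ∈ ℝᵖ. Then for k = 1, |tr((A + YYᵀ)⁻¹ B) - tr(A⁻¹ B)| ≤ ‖B‖ / τ_A, where ‖B‖ is the operator norm. -/

import Mathlib

open Matrix

/-- Spectral (ℓ²-operator) norm of a real matrix. -/
noncomputable def opNorm {p : ℕ} (B : Matrix (Fin p) (Fin p) ℝ) : ℝ :=
  ‖Matrix.toEuclideanCLM (𝕜 := ℝ) B‖

lemma aux_mul_vecMulVec {p : ℕ} (M : Matrix (Fin p) (Fin p) ℝ) (u v : Fin p → ℝ) :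
    M * vecMulVec u v = vecMulVec (M *ᵥ u) v := by
  ext i j
  simp only [mul_apply, vecMulVec_apply, mulVec, dotProduct, Finset.sum_mul]
  exact Finset.sum_congr rfl fun k _ => by ring

lemma aux_vecMulVec_mul {p : ℕ} (u v : Fin p → ℝ) (M : Matrix (Fin p) (Fin p) ℝ) :
    vecMulVec u v * M = vecMulVec u (v ᵥ* M) := by
  ext i j
  simp only [mul_apply, vecMulVec_apply, vecMul, dotProduct, Finset.mul_sum]
  exact Finset.sum_congr rfl fun k _ => by ring

lemma aux_vecMulVec_mul_vecMulVec {p : ℕ} (u v x y : Fin p → ℝ) :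
    vecMulVec u v * vecMulVec x y = (v ⬝ᵥ x) • vecMulVec u y := by
  ext i j
  simp only [mul_apply, vecMulVec_apply, dotProduct, Matrix.smul_apply, smul_eq_mul,
    Finset.sum_mul]
  exact Finset.sum_congr rfl fun k _ => by ring

lemma aux_trace_vecMulVec {p : ℕ} (u v : Fin p → ℝ) :
    (vecMulVec u v).trace = u ⬝ᵥ v := by
  simp [trace, vecMulVec_apply, dotProduct, diag]

lemma aux_opNorm_bound {p : ℕ} (B : Matrix (Fin p) (Fin p) ℝ) (x : Fin p → ℝ) :
    |x ⬝ᵥ (B *ᵥ x)| ≤ opNorm B * (x ⬝ᵥ x) := by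
  set x' : EuclideanSpace ℝ (Fin p) := (WithLp.equiv 2 _).symm x with hx'
  have h1 : x ⬝ᵥ (B *ᵥ x) = inner ℝ x' (Matrix.toEuclideanCLM (𝕜 := ℝ) B x') := by
    rw [inner_toEuclideanCLM, hx', WithLp.equiv_symm_apply]
  have h2 : x ⬝ᵥ x = ‖x'‖ * ‖x'‖ := by
    have h := real_inner_self_eq_norm_sq x'
    have h' : inner ℝ x' x' = x ⬝ᵥ x := by
      rw [hx', WithLp.equiv_symm_apply, PiLp.inner_apply]
      simp [dotProduct, sq]
    rw [← h', h]
    ring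
  rw [h1, h2]
  calc |inner ℝ x' (Matrix.toEuclideanCLM (𝕜 := ℝ) B x')|
      ≤ ‖x'‖ * ‖Matrix.toEuclideanCLM (𝕜 := ℝ) B x'‖ := abs_real_inner_le_norm _ _
    _ ≤ ‖x'‖ * (‖Matrix.toEuclideanCLM (𝕜 := ℝ) B‖ * ‖x'‖) := by
        gcongr
        exact ContinuousLinearMap.le_opNorm _ _
    _ = opNorm B * (‖x'‖ * ‖x'‖) := by rw [opNorm]; ring

/-- Rank-one perturbation bound for the trace of the resolvent, case k = 1. -/
theorem trace_resolvent_rank_one_perturbation {p : ℕ}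
    (A B : Matrix (Fin p) (Fin p) ℝ) (Y : Fin p → ℝ) (τA : ℝ)
    (hA : A.PosDef) (hτ : 0 < τA)
    (hlb : ∀ x : Fin p → ℝ, τA * (x ⬝ᵥ x) ≤ x ⬝ᵥ (A *ᵥ x)) :
    |((A + vecMulVec Y Y)⁻¹ * B).trace - (A⁻¹ * B).trace| ≤ opNorm B / τA := by
  have hdet : IsUnit A.det := isUnit_iff_ne_zero.mpr hA.det_pos.ne'
  have hAinv' : A * A⁻¹ = 1 := mul_nonsing_inv A hdet
  have hsymmA : Aᵀ = A := by
    ext i j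
    simpa using congrFun (congrFun hA.isHermitian i) j
  have hsymm : A⁻¹ᵀ = A⁻¹ := by rw [transpose_nonsing_inv, hsymmA]
  set w : Fin p → ℝ := A⁻¹ *ᵥ Y with hw
  set s : ℝ := Y ⬝ᵥ w with hs
  have hAw : A *ᵥ w = Y := by
    rw [hw, mulVec_mulVec, hAinv', one_mulVec]
  have hs_eq : s = w ⬝ᵥ (A *ᵥ w) := by
    rw [hAw, hs, dotProduct_comm]
  have hsw : τA * (w ⬝ᵥ w) ≤ s := hs_eq ▸ hlb w
  have hww_nonneg : 0 ≤ w ⬝ᵥ w := by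
    simpa [dotProduct] using Finset.sum_nonneg fun i (_ : i ∈ Finset.univ) => mul_self_nonneg (w i)
  have hs_nonneg : 0 ≤ s := le_trans (by positivity) hsw
  have h1s : (0:ℝ) < 1 + s := by linarith
  set V : Matrix (Fin p) (Fin p) ℝ := vecMulVec Y Y with hV
  set N : Matrix (Fin p) (Fin p) ℝ := A⁻¹ * V * A⁻¹ with hN
  set M : Matrix (Fin p) (Fin p) ℝ := A⁻¹ - (1 + s)⁻¹ • N with hM
  have hVAV : V * A⁻¹ * V = s • V := by
    rw [hV, mul_assoc, aux_mul_vecMulVec, ← hw, aux_vecMulVec_mul_vecMulVec, hs]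
  have hAN : A * N = V * A⁻¹ := by
    rw [hN, ← mul_assoc, ← mul_assoc, hAinv', one_mul]
  have hVN : V * N = s • (V * A⁻¹) := by
    rw [hN, ← mul_assoc, ← mul_assoc, hVAV, smul_mul_assoc]
  have hkey : (1 + s)⁻¹ • (V * A⁻¹) + (1 + s)⁻¹ • s • (V * A⁻¹) = V * A⁻¹ := by
    rw [smul_smul, ← add_smul]
    have hc : (1 + s)⁻¹ + (1 + s)⁻¹ * s = 1 := by field_simp
    rw [hc, one_smul]
  have hright : (A + V) * M = 1 := by
    rw [hM, mul_sub, add_mul, add_mul, hAinv', mul_smul_comm, mul_smul_comm, hAN, hVN]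
    rw [hkey]
    abel
  have hMinv : (A + V)⁻¹ = M := inv_eq_right_inv hright
  have hvmw : Y ᵥ* A⁻¹ = w := by
    rw [← hsymm, vecMul_transpose, hw]
  have hN_eq : N = vecMulVec w w := by
    rw [hN, hV, aux_mul_vecMulVec, ← hw, aux_vecMulVec_mul, hvmw]
  have htr : (N * B).trace = w ⬝ᵥ (B *ᵥ w) := by
    rw [hN_eq, aux_vecMulVec_mul, aux_trace_vecMulVec, dotProduct_mulVec]
    exact dotProduct_comm _ _
  rw [hMinv, hM, sub_mul, smul_mul_assoc, trace_sub, trace_smul, smul_eq_mul, htr]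
  rw [show (A⁻¹*B).trace - (1+s)⁻¹ * (w ⬝ᵥ B *ᵥ w) - (A⁻¹*B).trace
      = -((1+s)⁻¹ * (w ⬝ᵥ B *ᵥ w)) by ring]
  rw [abs_neg, abs_mul, abs_of_pos (inv_pos.mpr h1s)]
  have hb := aux_opNorm_bound B w
  have hK : (0:ℝ) ≤ opNorm B := norm_nonneg _
  have hdiv : w ⬝ᵥ w ≤ (1 + s) / τA := by
    rw [le_div_iff₀ hτ]
    nlinarith
  calc (1+s)⁻¹ * |w ⬝ᵥ B *ᵥ w|
      ≤ (1+s)⁻¹ * (opNorm B * (w ⬝ᵥ w)) := by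
        gcongr
    _ ≤ (1+s)⁻¹ * (opNorm B * ((1 + s) / τA)) := by gcongr
    _ = opNorm B / τA := by field_simp
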